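/- (Lemma 1.) Fix a segmentation R : P → Fin m and ε_ν ∈ (0,1). Then almost surely, sup over all admissible pairs (ν_d, ν_u) and all μ ∈ Θ(R) of | (1/n)·Σ_{t=⌊n·ν_d⌋+1}^{⌊n·ν_u⌋} l((R,μ); X_t) − (ν_u − ν_d)·L(R,μ) | → 0 as n → ∞; and the same almost-sure uniform convergence holds with l and L replaced by their gradients in μ, and with l and L replaced by their Hessians in μ. -/

import Mathlib

open MeasureTheory ProbabilityTheory Filter Topology

/-- The reduced Poisson log-likelihood of a count array `x` under segmentation `R`
and rates `μ`: `l((R,μ); x) = Σ_w Σ_i (x(i,w)·log μ(R i, w) − μ(R i, w))`. -/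
noncomputable def loglik {NI NW m : ℕ} (R : Fin NI → Fin m)
    (μ : Fin m × Fin NW → ℝ) (x : Fin NI × Fin NW → ℕ) : ℝ :=
  ∑ w : Fin NW, ∑ i : Fin NI, ((x (i, w) : ℝ) * Real.log (μ (R i, w)) - μ (R i, w))

/-- Gradient of `l((R,μ); x)` in `μ`: its `(h,w)` entry is
`Σ_{i : R i = h} (x(i,w)/μ(h,w) − 1)`. -/
noncomputable def loglikGrad {NI NW m : ℕ} (R : Fin NI → Fin m)
    (μ : Fin m × Fin NW → ℝ) (x : Fin NI × Fin NW → ℕ) :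
    Fin m × Fin NW → ℝ :=
  fun hw => ∑ i : Fin NI,
    if R i = hw.1 then ((x (i, hw.2) : ℝ) / μ hw - 1) else 0

/-- Diagonal of the Hessian of `l((R,μ); x)` in `μ`: its `(h,w)` entry is
`−Σ_{i : R i = h} x(i,w)/μ(h,w)²`. -/
noncomputable def loglikHess {NI NW m : ℕ} (R : Fin NI → Fin m)
    (μ : Fin m × Fin NW → ℝ) (x : Fin NI × Fin NW → ℕ) :
    Fin m × Fin NW → ℝ :=
  fun hw => -∑ i : Fin NI,
    if R i = hw.1 then (x (i, hw.2) : ℝ) / (μ hw) ^ 2 else 0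

/-- The expected log-likelihood `L(R,μ)` when the true per-pixel rates are
`λ°(i,w) = μ°(R° i, w)`. -/
noncomputable def expLoglik {NI NW m0 m : ℕ} (R0 : Fin NI → Fin m0)
    (μ0 : Fin m0 × Fin NW → ℝ) (R : Fin NI → Fin m) (μ : Fin m × Fin NW → ℝ) : ℝ :=
  ∑ w : Fin NW, ∑ i : Fin NI, (μ0 (R0 i, w) * Real.log (μ (R i, w)) - μ (R i, w))

/-- Gradient of `L(R,μ)` in `μ`. -/
noncomputable def expLoglikGrad {NI NW m0 m : ℕ} (R0 : Fin NI → Fin m0)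
    (μ0 : Fin m0 × Fin NW → ℝ) (R : Fin NI → Fin m) (μ : Fin m × Fin NW → ℝ) :
    Fin m × Fin NW → ℝ :=
  fun hw => ∑ i : Fin NI,
    if R i = hw.1 then (μ0 (R0 i, hw.2) / μ hw - 1) else 0

/-- Diagonal of the Hessian of `L(R,μ)` in `μ`. -/
noncomputable def expLoglikHess {NI NW m0 m : ℕ} (R0 : Fin NI → Fin m0)
    (μ0 : Fin m0 × Fin NW → ℝ) (R : Fin NI → Fin m) (μ : Fin m × Fin NW → ℝ) :
    Fin m × Fin NW → ℝ :=
  fun hw => -∑ i : Fin NI,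
    if R i = hw.1 then μ0 (R0 i, hw.2) / (μ hw) ^ 2 else 0

/-- The compact parameter box `Θ(R) = [C_d, C_u]^(Fin m × Fin N_W)`. -/
def Theta (Cd Cu : ℝ) (m NW : ℕ) : Set (Fin m × Fin NW → ℝ) :=
  {μ | ∀ p, μ p ∈ Set.Icc Cd Cu}

/-- An admissible pair of normalized endpoints: `0 ≤ ν_d < ν_u ≤ 1` with
`ν_u − ν_d > ε_ν`. -/
def AdmPair (epsnu : ℝ) : Type :=
  {q : ℝ × ℝ // 0 ≤ q.1 ∧ q.1 < q.2 ∧ q.2 ≤ 1 ∧ epsnu < q.2 - q.1}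


open scoped NNReal ENNReal

section Aux

lemma poisson_hasSum (r : ℝ≥0) :
    HasSum (fun n : ℕ => poissonPMFReal r n * n) r := by
  have h1 : HasSum (fun n : ℕ => poissonPMFReal r (n+1) * (n+1)) r := by
    have : (fun n : ℕ => poissonPMFReal r (n+1) * (n+1))
        = fun n : ℕ => (r : ℝ) * poissonPMFReal r n := by
      funext n
      unfold poissonPMFReal
      rw [Nat.factorial_succ]
      push_cast
      have h0 : ((n.factorial : ℝ)) ≠ 0 := Nat.cast_ne_zero.2 n.factorial_ne_zero
      field_simp
      ring
    rw [this]
    simpa [poissonPMFReal] using (poissonPMFRealSum r).mul_left (r : ℝ)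
  have h2 := (hasSum_nat_add_iff (f := fun n : ℕ => poissonPMFReal r n * n) (g := (r : ℝ)) 1).1
    (by simpa using h1)
  simpa using h2

lemma poisson_integrable (r : ℝ≥0) :
    Integrable (fun n : ℕ => (n : ℝ)) (poissonMeasure r) := by
  constructor
  · exact (measurable_from_top).aestronglyMeasurable
  · rw [HasFiniteIntegral]
    rw [MeasureTheory.lintegral_countable']
    have hsingle : ∀ n : ℕ, (poissonMeasure r) {n} = ENNReal.ofReal (poissonPMFReal r n) := by
      intro n
      rw [poissonMeasure_singleton]
      rfl
    have heq : ∀ n : ℕ, (‖(n : ℝ)‖₊ : ℝ≥0∞) * (poissonMeasure r) {n}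
        = ENNReal.ofReal (poissonPMFReal r n * n) := by
      intro n
      rw [hsingle n, ENNReal.ofReal_mul poissonPMFReal_nonneg]
      rw [mul_comm]
      congr 1
      simp [Real.enorm_eq_ofReal (by positivity : (0:ℝ) ≤ (n:ℝ))]
    calc ∑' n : ℕ, (‖(n : ℝ)‖₊ : ℝ≥0∞) * (poissonMeasure r) {n}
        = ∑' n : ℕ, ENNReal.ofReal (poissonPMFReal r n * n) := by simp_rw [heq]
      _ = ENNReal.ofReal (∑' n : ℕ, poissonPMFReal r n * n) := by
          rw [ENNReal.ofReal_tsum_of_nonneg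
            (fun n => mul_nonneg poissonPMFReal_nonneg (Nat.cast_nonneg n))
            (poisson_hasSum r).summable]
      _ < ⊤ := ENNReal.ofReal_lt_top

lemma poisson_mean (r : ℝ≥0) : ∫ n, (n : ℝ) ∂(poissonMeasure r) = r := by
  rw [integral_poissonMeasure]
  have h : ∀ n : ℕ, ((poissonPMF r) n).toReal = poissonPMFReal r n := by
    intro n
    show (ENNReal.ofReal (poissonPMFReal r n)).toReal = _
    exact ENNReal.toReal_ofReal poissonPMFReal_nonneg
  simp_rw [smul_eq_mul]
  exact (poisson_hasSum r).tsum_eq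

lemma slln_coord {Ω : Type*} [MeasurableSpace Ω] (Pr : Measure Ω) [IsProbabilityMeasure Pr]
    (X : ℕ → Ω → ℕ)
    (hmeas : ∀ t, Measurable (X t))
    (hpind : Pairwise fun i j => IndepFun (X i) (X j) Pr)
    (r : ℝ) (hr : 0 ≤ r)
    (hlawp : ∀ t, Measure.map (X t) Pr = poissonMeasure r.toNNReal) :
    ∀ᵐ ω ∂Pr, Tendsto (fun n : ℕ => (∑ t ∈ Finset.range n, (X t ω : ℝ)) / n)
      atTop (𝓝 r) := by
  set Y : ℕ → Ω → ℝ := fun t ω => (X t ω : ℝ) with hY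
  have hint : Integrable (Y 0) Pr := by
    have h := poisson_integrable r.toNNReal
    rw [← hlawp 0] at h
    exact (integrable_map_measure (μ := Pr) (g := fun n : ℕ => (n : ℝ))
      measurable_from_top.aestronglyMeasurable (hmeas 0).aemeasurable).1 h
  have hYind : Pairwise (Function.onFun (IndepFun · · Pr) Y) := by
    intro i j hij
    exact (hpind hij).comp measurable_from_top measurable_from_top
  have hYident : ∀ t, IdentDistrib (Y t) (Y 0) Pr Pr := by
    intro t
    have hbase : IdentDistrib (X t) (X 0) Pr Pr :=
      ⟨(hmeas t).aemeasurable, (hmeas 0).aemeasurable, by rw [hlawp t, hlawp 0]⟩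
    exact hbase.comp measurable_from_top
  have hmean : Pr[Y 0] = r := by
    show ∫ ω, ((X 0 ω : ℕ) : ℝ) ∂Pr = r
    rw [← integral_map (hmeas 0).aemeasurable
      (measurable_from_top.aestronglyMeasurable (f := fun n : ℕ => (n : ℝ))), hlawp 0,
      poisson_mean, Real.coe_toNNReal _ hr]
  have h := strong_law_ae_real Y hint hYind hYident
  rw [hmean] at h
  exact h

lemma max_div_tendsto (a : ℕ → ℝ) (c : ℝ)
    (h : Tendsto (fun n => a n / n) atTop (𝓝 c)) :
    Tendsto (fun n : ℕ => (⨆ k : Fin (n+2), |a k - k * c|) / n) atTop (𝓝 0) := by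
  have hnonneg : ∀ n : ℕ, 0 ≤ (⨆ k : Fin (n+2), |a k - k * c|) / n := fun n =>
    div_nonneg (Real.iSup_nonneg fun k => abs_nonneg _) (Nat.cast_nonneg n)
  rw [NormedAddCommGroup.tendsto_nhds_zero]
  intro ε hε
  obtain ⟨K, hK⟩ := (Metric.tendsto_atTop.1 h) (ε/4) (by positivity)
  have hkey : ∀ k : ℕ, K ≤ k → 1 ≤ k → |a k - k * c| ≤ (ε/4) * k := by
    intro k hKk h1k
    have hk0 : (0:ℝ) < k := by exact_mod_cast h1k
    have h2 := hK k hKk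
    rw [Real.dist_eq] at h2
    have h3 : |a k / k - c| ≤ ε/4 := le_of_lt h2
    calc |a k - k * c| = |a k / k - c| * k := by
          rw [show a k - k * c = (a k / k - c) * k by
            rw [sub_mul, div_mul_cancel₀ _ (ne_of_gt hk0), mul_comm c], abs_mul, abs_of_pos hk0]
      _ ≤ (ε/4) * k := by
          apply mul_le_mul_of_nonneg_right h3 (le_of_lt hk0)
  set C : ℝ := ⨆ k : Fin (K+1), |a k - k * c| with hC
  have hC0 : 0 ≤ C := Real.iSup_nonneg fun k => abs_nonneg _
  have hCb : ∀ k : ℕ, k ≤ K → |a k - k * c| ≤ C := by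
    intro k hk
    exact le_ciSup (f := fun j : Fin (K+1) => |a j - (j:ℕ) * c|)
      (Set.Finite.bddAbove (Set.finite_range _)) (⟨k, Nat.lt_succ_of_le hk⟩ : Fin (K+1))
  have hCd : Tendsto (fun n : ℕ => C / n) atTop (𝓝 0) := tendsto_const_div_atTop_nhds_zero_nat C
  filter_upwards [eventually_ge_atTop 1,
    (hCd.eventually (eventually_lt_nhds (by positivity : (0:ℝ) < ε/2))),
    eventually_ge_atTop (2 : ℕ)] with n hn1 hCn h2n
  have hn0 : (0:ℝ) < n := by exact_mod_cast hn1
  rw [Real.norm_eq_abs, abs_of_nonneg (hnonneg n)]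
  have hbound : (⨆ k : Fin (n+2), |a k - k * c|) ≤ max C ((ε/4) * (n+2)) := by
    apply ciSup_le
    intro k
    rcases le_or_gt (k : ℕ) K with hk | hk
    · exact le_max_of_le_left (hCb k hk)
    · rcases Nat.eq_zero_or_pos (k : ℕ) with h0 | h1
      · exact absurd (h0 ▸ hk) (Nat.not_lt_zero K)
      · refine le_max_of_le_right ?_
        calc |a k - k * c| ≤ (ε/4) * k := hkey k (le_of_lt hk) h1
          _ ≤ (ε/4) * (n+2) := by
              apply mul_le_mul_of_nonneg_left _ (by positivity)
              have hlt : (k:ℕ) < n + 2 := k.isLt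
              exact_mod_cast le_of_lt hlt
  calc (⨆ k : Fin (n+2), |a k - k * c|) / n ≤ max C ((ε/4) * (n+2)) / n := by
        gcongr
    _ = max (C / n) ((ε/4) * (n+2) / n) := by
        rw [max_div_div_right (le_of_lt hn0)]
    _ < ε := by
        apply max_lt
        · linarith
        · have h2 : (n:ℝ) + 2 ≤ 2 * n := by
            have : (2:ℝ) ≤ n := by exact_mod_cast h2n
            linarith
          have h3 : (ε/4) * (n+2) / n ≤ (ε/4) * (2*n) / n := by
            gcongr
          have heq : (ε/4) * (2*(n:ℝ)) / n = ε/2 := by field_simp; ring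
          calc (ε/4) * ((n:ℝ)+2) / n ≤ ε/2 := by rw [← heq]; exact h3
            _ < ε := by linarith

lemma iSup2_tendsto_zero {ι : Type*} {κ : Type*} [Nonempty ι] [Nonempty κ]
    (f : ℕ → ι → κ → ℝ) (g : ℕ → ℝ) (hg : Tendsto g atTop (𝓝 0))
    (h0 : ∀ n i k, 0 ≤ f n i k)
    (hb : ∀ᶠ n in atTop, ∀ i k, f n i k ≤ g n) :
    Tendsto (fun n => ⨆ i, ⨆ k, f n i k) atTop (𝓝 0) := by
  apply tendsto_of_tendsto_of_tendsto_of_le_of_le' tendsto_const_nhds hg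
  · exact Eventually.of_forall fun n =>
      Real.iSup_nonneg fun i => Real.iSup_nonneg fun k => h0 n i k
  · filter_upwards [hb] with n hn
    exact ciSup_le fun i => ciSup_le fun k => hn i k

lemma floor_bound (n : ℕ) (ν : ℝ) (h0 : 0 ≤ ν) (h1 : ν ≤ 1) (hn : 1 ≤ n) :
    |((⌊(n:ℝ) * ν⌋₊ : ℝ) + 1) / n - ν| ≤ 1 / n ∧ ⌊(n:ℝ) * ν⌋₊ ≤ n := by
  have hn0 : (0:ℝ) < n := by exact_mod_cast hn
  have hfl : (⌊(n:ℝ) * ν⌋₊ : ℝ) ≤ (n:ℝ) * ν := Nat.floor_le (by positivity)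
  have hfu : (n:ℝ) * ν < (⌊(n:ℝ) * ν⌋₊ : ℝ) + 1 := Nat.lt_floor_add_one _
  have hinv : (1/(n:ℝ)) * (n:ℝ) = 1 := by field_simp
  constructor
  · rw [abs_le]
    constructor
    · have hx : 0 ≤ ((⌊(n:ℝ) * ν⌋₊ : ℝ) + 1) / n - ν := by
        rw [sub_nonneg, le_div_iff₀ hn0]; nlinarith
      have hy : -(1/(n:ℝ)) ≤ 0 := by positivity |> fun h => neg_nonpos.mpr (le_of_lt h)
      linarith
    · rw [sub_le_iff_le_add, div_le_iff₀ hn0]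
      nlinarith
  · have h : (n:ℝ) * ν ≤ ((n:ℕ):ℝ) := by nlinarith
    calc ⌊(n:ℝ) * ν⌋₊ ≤ ⌊((n:ℕ):ℝ)⌋₊ := Nat.floor_le_floor h
      _ = n := Nat.floor_natCast n

lemma sum_loglik_eq {NI NW m : ℕ} (R : Fin NI → Fin m) (μ : Fin m × Fin NW → ℝ)
    (x : ℕ → Fin NI × Fin NW → ℕ) (s : Finset ℕ) :
    ∑ t ∈ s, loglik R μ (x t) =
      ∑ w : Fin NW, ∑ i : Fin NI,
        ((∑ t ∈ s, (x t (i,w) : ℝ)) * Real.log (μ (R i, w)) - (s.card : ℝ) * μ (R i, w)) := by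
  unfold loglik
  rw [Finset.sum_comm]
  refine Finset.sum_congr rfl fun w _ => ?_
  rw [Finset.sum_comm]
  refine Finset.sum_congr rfl fun i _ => ?_
  rw [Finset.sum_sub_distrib, ← Finset.sum_mul, Finset.sum_const, nsmul_eq_mul]

lemma sum_loglikGrad_apply {NI NW m : ℕ} (R : Fin NI → Fin m) (μ : Fin m × Fin NW → ℝ)
    (x : ℕ → Fin NI × Fin NW → ℕ) (s : Finset ℕ) (hw : Fin m × Fin NW) :
    (∑ t ∈ s, loglikGrad R μ (x t)) hw =
      ∑ i : Fin NI, (if R i = hw.1 then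
        ((∑ t ∈ s, (x t (i, hw.2) : ℝ)) / μ hw - (s.card : ℝ)) else 0) := by
  rw [Finset.sum_apply]
  unfold loglikGrad
  rw [Finset.sum_comm]
  refine Finset.sum_congr rfl fun i _ => ?_
  by_cases h : R i = hw.1
  · simp only [h, if_true]
    rw [Finset.sum_sub_distrib, ← Finset.sum_div, Finset.sum_const, nsmul_eq_mul, mul_one]
  · simp [h]

lemma sum_loglikHess_apply {NI NW m : ℕ} (R : Fin NI → Fin m) (μ : Fin m × Fin NW → ℝ)
    (x : ℕ → Fin NI × Fin NW → ℕ) (s : Finset ℕ) (hw : Fin m × Fin NW) :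
    (∑ t ∈ s, loglikHess R μ (x t)) hw =
      -∑ i : Fin NI, (if R i = hw.1 then
        ((∑ t ∈ s, (x t (i, hw.2) : ℝ)) / (μ hw)^2) else 0) := by
  rw [Finset.sum_apply]
  unfold loglikHess
  rw [Finset.sum_neg_distrib]
  congr 1
  rw [Finset.sum_comm]
  refine Finset.sum_congr rfl fun i _ => ?_
  by_cases h : R i = hw.1
  · simp only [h, if_true]
    rw [← Finset.sum_div]
  · simp [h]

end Aux

set_option maxHeartbeats 1000000
/-- Lemma 1: almost surely, uniformly over all admissible pairs `(ν_d, ν_u)` and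
all `μ ∈ Θ(R)`, the partial-sum log-likelihood
`(1/n)·Σ_{t=⌊n ν_d⌋+1}^{⌊n ν_u⌋} l((R,μ); X_t)` converges to
`(ν_u − ν_d)·L(R,μ)`; likewise for the gradients and Hessians in `μ`. -/
theorem lemma1_uniform_partial_sum_slln
    {NI NW m0 m : ℕ} (Cd Cu : ℝ) (hCd : 0 < Cd) (hCdCu : Cd ≤ Cu)
    (epsnu : ℝ) (hepsnu : 0 < epsnu ∧ epsnu < 1)
    (R0 : Fin NI → Fin m0) (hR0surj : ∀ h, ∃ i, R0 i = h)
    (μ0 : Fin m0 × Fin NW → ℝ) (hA1 : ∀ p, μ0 p ∈ Set.Icc Cd Cu)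
    (R : Fin NI → Fin m)
    {Ω : Type*} [MeasurableSpace Ω] (Pr : Measure Ω) [IsProbabilityMeasure Pr]
    (X : ℕ → Ω → Fin NI × Fin NW → ℕ)
    (hmeas : ∀ t p, Measurable fun ω => X t ω p)
    (hindep : iIndepFun
      (fun (q : ℕ × (Fin NI × Fin NW)) ω => X q.1 ω q.2) Pr)
    (hlaw : ∀ t p, Measure.map (fun ω => X t ω p) Pr
      = poissonMeasure (μ0 (R0 p.1, p.2)).toNNReal) :
    ∀ᵐ ω ∂Pr,
      (Tendsto (fun n : ℕ => ⨆ (q : AdmPair epsnu) (μ : Theta Cd Cu m NW),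
          |(1 / (n : ℝ)) * ∑ t ∈ Finset.Ioc ⌊(n : ℝ) * q.1.1⌋₊ ⌊(n : ℝ) * q.1.2⌋₊,
              loglik R μ.1 (X t ω)
            - (q.1.2 - q.1.1) * expLoglik R0 μ0 R μ.1|) atTop (𝓝 0)) ∧
      (Tendsto (fun n : ℕ => ⨆ (q : AdmPair epsnu) (μ : Theta Cd Cu m NW),
          ‖(1 / (n : ℝ)) • ∑ t ∈ Finset.Ioc ⌊(n : ℝ) * q.1.1⌋₊ ⌊(n : ℝ) * q.1.2⌋₊,
              loglikGrad R μ.1 (X t ω)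
            - (q.1.2 - q.1.1) • expLoglikGrad R0 μ0 R μ.1‖) atTop (𝓝 0)) ∧
      (Tendsto (fun n : ℕ => ⨆ (q : AdmPair epsnu) (μ : Theta Cd Cu m NW),
          ‖(1 / (n : ℝ)) • ∑ t ∈ Finset.Ioc ⌊(n : ℝ) * q.1.1⌋₊ ⌊(n : ℝ) * q.1.2⌋₊,
              loglikHess R μ.1 (X t ω)
            - (q.1.2 - q.1.1) • expLoglikHess R0 μ0 R μ.1‖) atTop (𝓝 0)) := by
  classical
  obtain ⟨hε0, hε1⟩ := hepsnu
  have hCu0 : (0:ℝ) < Cu := lt_of_lt_of_le hCd hCdCu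
  haveI hne1 : Nonempty (AdmPair epsnu) :=
    ⟨⟨(0, 1), le_refl 0, one_pos, le_refl 1, by simpa using hε1⟩⟩
  haveI hne2 : Nonempty (Theta Cd Cu m NW) :=
    ⟨⟨fun _ => Cd, fun p => ⟨le_refl Cd, hCdCu⟩⟩⟩
  have hae : ∀ᵐ ω ∂Pr, ∀ p : Fin NI × Fin NW,
      Tendsto (fun n : ℕ => (∑ t ∈ Finset.range n, (X t ω p : ℝ)) / n) atTop
        (𝓝 (μ0 (R0 p.1, p.2))) := by
    rw [MeasureTheory.ae_all_iff]
    intro p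
    have hr : 0 ≤ μ0 (R0 p.1, p.2) := le_trans (le_of_lt hCd) (hA1 _).1
    exact slln_coord Pr (fun t ω => X t ω p) (fun t => hmeas t p)
      (fun i j hij => hindep.indepFun
        (show ((i,p) : ℕ × (Fin NI × Fin NW)) ≠ (j,p) from
          fun hc => hij (congrArg Prod.fst hc)))
      _ hr (fun t => hlaw t p)
  filter_upwards [hae] with ω hω
  -- deterministic part
  set a : Fin NI × Fin NW → ℕ → ℝ := fun p n => ∑ t ∈ Finset.range n, (X t ω p : ℝ)
    with hadef
  set Mp : Fin NI × Fin NW → ℕ → ℝ :=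
    fun p n => (⨆ k : Fin (n+2), |a p k - (k:ℕ) * μ0 (R0 p.1, p.2)|) / n with hMdef
  have hMp0 : ∀ p n, 0 ≤ Mp p n := fun p n =>
    div_nonneg (Real.iSup_nonneg fun k => abs_nonneg _) (Nat.cast_nonneg n)
  have hMptend : ∀ p, Tendsto (fun n => Mp p n) atTop (𝓝 0) :=
    fun p => max_div_tendsto (a p) (μ0 (R0 p.1, p.2)) (hω p)
  set S : ℕ → ℝ := fun n => ∑ p : Fin NI × Fin NW, Mp p n with hSdef
  have hStend : Tendsto S atTop (𝓝 0) := by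
    have h := tendsto_finset_sum (Finset.univ : Finset (Fin NI × Fin NW))
      (fun p (_ : p ∈ Finset.univ) => hMptend p)
    simpa using h
  have hS0 : ∀ n, 0 ≤ S n := fun n => Finset.sum_nonneg fun p _ => hMp0 p n
  have hMpS : ∀ p n, Mp p n ≤ S n := fun p n =>
    Finset.single_le_sum (fun p _ => hMp0 p n) (Finset.mem_univ p)
  have hinv : Tendsto (fun n : ℕ => 1 / (n:ℝ)) atTop (𝓝 0) :=
    tendsto_one_div_atTop_nhds_zero_nat
  -- key estimates
  have hkey : ∀ n : ℕ, 1 ≤ n → ∀ νd νu : ℝ, 0 ≤ νd → νd < νu → νu ≤ 1 →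
      (∀ i : Fin NI, ∀ w : Fin NW,
        |(∑ t ∈ Finset.Ioc ⌊(n:ℝ)*νd⌋₊ ⌊(n:ℝ)*νu⌋₊, (X t ω (i,w) : ℝ)) / n
          - (νu - νd) * μ0 (R0 i, w)| ≤ 2 * S n + 2*Cu*(1/n))
      ∧ |(((Finset.Ioc ⌊(n:ℝ)*νd⌋₊ ⌊(n:ℝ)*νu⌋₊).card : ℕ) : ℝ) / n - (νu - νd)|
          ≤ 2*(1/n) := by
    intro n hn νd νu h0d hdu hu1
    have hn0 : (0:ℝ) < n := by exact_mod_cast hn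
    have hd1 : νd ≤ 1 := le_trans (le_of_lt hdu) hu1
    have hu0 : 0 ≤ νu := le_trans h0d (le_of_lt hdu)
    have hfA := floor_bound n νd h0d hd1 hn
    have hfB := floor_bound n νu hu0 hu1 hn
    set A := ⌊(n:ℝ)*νd⌋₊ with hAdef
    set B := ⌊(n:ℝ)*νu⌋₊ with hBdef
    have hAB : A ≤ B := Nat.floor_le_floor (by nlinarith)
    have hcard : (((Finset.Ioc A B).card : ℕ) : ℝ) = (B:ℝ) - (A:ℝ) := by
      rw [Nat.card_Ioc, Nat.cast_sub hAB]
    have heB := hfB.1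
    have heA := hfA.1
    have he : |((((B:ℕ):ℝ)+1)/n - νu) - ((((A:ℕ):ℝ)+1)/n - νd)| ≤ 2*(1/n) := by
      rw [abs_le] at heB heA ⊢
      constructor <;> [linarith; linarith]
    constructor
    · intro i w
      have hsum : ∑ t ∈ Finset.Ioc A B, (X t ω (i,w) : ℝ)
          = a (i,w) (B+1) - a (i,w) (A+1) := by
        simp only [hadef]
        rw [← Finset.Ico_add_one_add_one_eq_Ioc, Finset.sum_Ico_eq_sub _ (Nat.add_le_add_right hAB 1)]
      have hBk : B + 1 < n + 2 := Nat.succ_lt_succ (Nat.lt_succ_of_le hfB.2)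
      have hAk : A + 1 < n + 2 := Nat.succ_lt_succ (Nat.lt_succ_of_le hfA.2)
      have hub : |a (i,w) (B+1) - (((B:ℕ):ℝ)+1) * μ0 (R0 i, w)| / n ≤ Mp (i,w) n := by
        simp only [hMdef]
        gcongr
        have hle := le_ciSup
          (f := fun k : Fin (n+2) => |a (i,w) (k:ℕ) - ((k:ℕ):ℝ) * μ0 (R0 (i,w).1, (i,w).2)|)
          (Set.Finite.bddAbove (Set.finite_range _)) (⟨B+1, hBk⟩ : Fin (n+2))
        simpa using hle
      have hua : |a (i,w) (A+1) - (((A:ℕ):ℝ)+1) * μ0 (R0 i, w)| / n ≤ Mp (i,w) n := by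
        simp only [hMdef]
        gcongr
        have hle := le_ciSup
          (f := fun k : Fin (n+2) => |a (i,w) (k:ℕ) - ((k:ℕ):ℝ) * μ0 (R0 (i,w).1, (i,w).2)|)
          (Set.Finite.bddAbove (Set.finite_range _)) (⟨A+1, hAk⟩ : Fin (n+2))
        simpa using hle
      rw [hsum]
      have hiden : (a (i,w) (B+1) - a (i,w) (A+1)) / n - (νu - νd) * μ0 (R0 i, w)
          = (a (i,w) (B+1) - (((B:ℕ):ℝ)+1) * μ0 (R0 i, w))/n
            - (a (i,w) (A+1) - (((A:ℕ):ℝ)+1) * μ0 (R0 i, w))/n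
            + μ0 (R0 i, w) * (((((B:ℕ):ℝ)+1)/n - νu) - ((((A:ℕ):ℝ)+1)/n - νd)) := by
        field_simp
        ring
      rw [hiden]
      have hmu0 : 0 ≤ μ0 (R0 i, w) := le_trans (le_of_lt hCd) (hA1 _).1
      have htri : ∀ x y z : ℝ, |x - y + z| ≤ |x| + |y| + |z| := by
        intro x y z
        calc |x - y + z| ≤ |x - y| + |z| := abs_add_le _ _
          _ ≤ |x| + |y| + |z| := by
              have h := abs_sub x y
              linarith
      calc |(a (i,w) (B+1) - (((B:ℕ):ℝ)+1) * μ0 (R0 i, w))/n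
            - (a (i,w) (A+1) - (((A:ℕ):ℝ)+1) * μ0 (R0 i, w))/n
            + μ0 (R0 i, w) * (((((B:ℕ):ℝ)+1)/n - νu) - ((((A:ℕ):ℝ)+1)/n - νd))|
          ≤ |(a (i,w) (B+1) - (((B:ℕ):ℝ)+1) * μ0 (R0 i, w))/n|
            + |(a (i,w) (A+1) - (((A:ℕ):ℝ)+1) * μ0 (R0 i, w))/n|
            + |μ0 (R0 i, w) * (((((B:ℕ):ℝ)+1)/n - νu) - ((((A:ℕ):ℝ)+1)/n - νd))| :=
            htri _ _ _
        _ ≤ Mp (i,w) n + Mp (i,w) n + Cu * (2*(1/n)) := by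
            have h1 : |(a (i,w) (B+1) - (((B:ℕ):ℝ)+1) * μ0 (R0 i, w))/n|
                = |a (i,w) (B+1) - (((B:ℕ):ℝ)+1) * μ0 (R0 i, w)| / n := by
              rw [abs_div, abs_of_pos hn0]
            have h2 : |(a (i,w) (A+1) - (((A:ℕ):ℝ)+1) * μ0 (R0 i, w))/n|
                = |a (i,w) (A+1) - (((A:ℕ):ℝ)+1) * μ0 (R0 i, w)| / n := by
              rw [abs_div, abs_of_pos hn0]
            have h3 : |μ0 (R0 i, w) * (((((B:ℕ):ℝ)+1)/n - νu) - ((((A:ℕ):ℝ)+1)/n - νd))|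
                ≤ Cu * (2*(1/n)) := by
              rw [abs_mul, abs_of_nonneg hmu0]
              exact mul_le_mul (hA1 _).2 he (abs_nonneg _) (le_of_lt hCu0)
            rw [h1, h2]
            have := hub
            have := hua
            linarith
        _ ≤ 2 * S n + 2*Cu*(1/n) := by
            have h1 := hMpS (i,w) n
            linarith
    · rw [hcard]
      have hiden : ((B:ℕ):ℝ)/n - (A:ℝ)/n - (νu - νd)
          = ((((B:ℕ):ℝ)+1)/n - νu) - ((((A:ℕ):ℝ)+1)/n - νd) := by
        field_simp
        ring
      have hiden2 : (((B:ℕ):ℝ) - (A:ℝ))/n - (νu - νd)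
          = ((((B:ℕ):ℝ)+1)/n - νu) - ((((A:ℕ):ℝ)+1)/n - νd) := by
        rw [sub_div, hiden]
      rw [hiden2]
      exact he
  -- log bound
  set Clog : ℝ := max |Real.log Cd| |Real.log Cu| with hClogdef
  have hClog0 : 0 ≤ Clog := le_trans (abs_nonneg _) (le_max_left _ _)
  have hlog : ∀ x : ℝ, Cd ≤ x → x ≤ Cu → |Real.log x| ≤ Clog := fun x h1 h2 =>
    abs_le_max_abs_abs (Real.log_le_log hCd h1) (Real.log_le_log (lt_of_lt_of_le hCd h1) h2)
  refine ⟨?_, ?_, ?_⟩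
  · -- loglik
    set b1 : ℕ → ℝ := fun n =>
      (NW:ℝ) * ((NI:ℝ) * ((2 * S n + 2*Cu*(1/n)) * Clog + (2*(1/n)) * Cu)) with hb1def
    have hb1tend : Tendsto b1 atTop (𝓝 0) := by
      have h := ((((hStend.const_mul 2).add (hinv.const_mul (2*Cu))).mul_const Clog).add
        ((hinv.const_mul 2).mul_const Cu)).const_mul (NI:ℝ) |>.const_mul (NW:ℝ)
      simpa [hb1def] using h
    refine iSup2_tendsto_zero _ b1 hb1tend (fun n q μv => abs_nonneg _) ?_
    filter_upwards [eventually_ge_atTop 1] with n hn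
    intro q μv
    obtain ⟨⟨νd, νu⟩, hq1, hq2, hq3, hq4⟩ := q
    obtain ⟨v, hv'⟩ := μv
    have hv : ∀ p, v p ∈ Set.Icc Cd Cu := hv'
    dsimp only
    have hn0 : (0:ℝ) < n := by exact_mod_cast hn
    rw [sum_loglik_eq R v (fun t => X t ω) (Finset.Ioc ⌊(n:ℝ)*νd⌋₊ ⌊(n:ℝ)*νu⌋₊)]
    unfold expLoglik
    have hId : (1/(n:ℝ)) * (∑ w : Fin NW, ∑ i : Fin NI,
          ((∑ t ∈ Finset.Ioc ⌊(n:ℝ)*νd⌋₊ ⌊(n:ℝ)*νu⌋₊, ((X t ω (i,w) : ℕ) : ℝ))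
              * Real.log (v (R i, w))
            - (((Finset.Ioc ⌊(n:ℝ)*νd⌋₊ ⌊(n:ℝ)*νu⌋₊).card : ℕ) : ℝ) * v (R i, w)))
        - (νu - νd) * (∑ w : Fin NW, ∑ i : Fin NI,
            (μ0 (R0 i, w) * Real.log (v (R i, w)) - v (R i, w)))
        = ∑ w : Fin NW, ∑ i : Fin NI,
            (((∑ t ∈ Finset.Ioc ⌊(n:ℝ)*νd⌋₊ ⌊(n:ℝ)*νu⌋₊, ((X t ω (i,w) : ℕ) : ℝ)) / n
                - (νu - νd) * μ0 (R0 i, w)) * Real.log (v (R i, w))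
              - ((((Finset.Ioc ⌊(n:ℝ)*νd⌋₊ ⌊(n:ℝ)*νu⌋₊).card : ℕ) : ℝ) / n
                - (νu - νd)) * v (R i, w)) := by
      rw [Finset.mul_sum, Finset.mul_sum, ← Finset.sum_sub_distrib]
      refine Finset.sum_congr rfl fun w _ => ?_
      rw [Finset.mul_sum, Finset.mul_sum, ← Finset.sum_sub_distrib]
      refine Finset.sum_congr rfl fun i _ => ?_
      field_simp
      ring
    rw [hId]
    have hk := hkey n hn νd νu hq1 hq2 hq3
    calc |∑ w : Fin NW, ∑ i : Fin NI,
            (((∑ t ∈ Finset.Ioc ⌊(n:ℝ)*νd⌋₊ ⌊(n:ℝ)*νu⌋₊, ((X t ω (i,w) : ℕ) : ℝ)) / n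
                - (νu - νd) * μ0 (R0 i, w)) * Real.log (v (R i, w))
              - ((((Finset.Ioc ⌊(n:ℝ)*νd⌋₊ ⌊(n:ℝ)*νu⌋₊).card : ℕ) : ℝ) / n
                - (νu - νd)) * v (R i, w))|
        ≤ ∑ w : Fin NW, ∑ i : Fin NI,
            |((∑ t ∈ Finset.Ioc ⌊(n:ℝ)*νd⌋₊ ⌊(n:ℝ)*νu⌋₊, ((X t ω (i,w) : ℕ) : ℝ)) / n
                - (νu - νd) * μ0 (R0 i, w)) * Real.log (v (R i, w))
              - ((((Finset.Ioc ⌊(n:ℝ)*νd⌋₊ ⌊(n:ℝ)*νu⌋₊).card : ℕ) : ℝ) / n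
                - (νu - νd)) * v (R i, w)| := by
          refine (Finset.abs_sum_le_sum_abs _ _).trans ?_
          exact Finset.sum_le_sum fun w _ => Finset.abs_sum_le_sum_abs _ _
      _ ≤ ∑ w : Fin NW, ∑ i : Fin NI, ((2 * S n + 2*Cu*(1/n)) * Clog + (2*(1/n)) * Cu) := by
          refine Finset.sum_le_sum fun w _ => Finset.sum_le_sum fun i _ => ?_
          have hD := hk.1 i w
          have hδ := hk.2
          have hL : |Real.log (v (R i, w))| ≤ Clog := hlog _ (hv (R i, w)).1 (hv (R i, w)).2
          have hV : |v (R i, w)| ≤ Cu := by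
            rw [abs_of_nonneg (le_trans (le_of_lt hCd) (hv (R i, w)).1)]
            exact (hv (R i, w)).2
          have hDb0 : (0:ℝ) ≤ 2 * S n + 2*Cu*(1/n) := by
            have := hS0 n
            positivity
          calc |_ - _| ≤ |((∑ t ∈ Finset.Ioc ⌊(n:ℝ)*νd⌋₊ ⌊(n:ℝ)*νu⌋₊, ((X t ω (i,w) : ℕ) : ℝ)) / n
                - (νu - νd) * μ0 (R0 i, w)) * Real.log (v (R i, w))|
              + |((((Finset.Ioc ⌊(n:ℝ)*νd⌋₊ ⌊(n:ℝ)*νu⌋₊).card : ℕ) : ℝ) / n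
                - (νu - νd)) * v (R i, w)| := abs_sub _ _
            _ ≤ (2 * S n + 2*Cu*(1/n)) * Clog + (2*(1/n)) * Cu := by
                rw [abs_mul, abs_mul]
                exact add_le_add
                  (mul_le_mul hD hL (abs_nonneg _) hDb0)
                  (mul_le_mul hδ hV (abs_nonneg _) (by positivity))
      _ = b1 n := by
          rw [hb1def]
          simp only [Finset.sum_const, Finset.card_univ, Fintype.card_fin, nsmul_eq_mul]
  · -- grad
    set b2 : ℕ → ℝ := fun n => (NI:ℝ) * ((2 * S n + 2*Cu*(1/n))/Cd + 2*(1/n)) with hb2def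
    have hb2tend : Tendsto b2 atTop (𝓝 0) := by
      have h := ((((hStend.const_mul 2).add (hinv.const_mul (2*Cu))).div_const Cd).add
        (hinv.const_mul 2)).const_mul (NI:ℝ)
      simpa [hb2def] using h
    refine iSup2_tendsto_zero _ b2 hb2tend (fun n q μv => norm_nonneg _) ?_
    filter_upwards [eventually_ge_atTop 1] with n hn
    intro q μv
    obtain ⟨⟨νd, νu⟩, hq1, hq2, hq3, hq4⟩ := q
    obtain ⟨v, hv'⟩ := μv
    have hv : ∀ p, v p ∈ Set.Icc Cd Cu := hv'
    dsimp only
    have hn0 : (0:ℝ) < n := by exact_mod_cast hn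
    have hin : (0:ℝ) ≤ 2 * S n + 2*Cu*(1/n) := by
      have := hS0 n
      positivity
    have hb2nn : 0 ≤ b2 n := by
      rw [hb2def]
      dsimp only
      have h1 : (0:ℝ) ≤ (2 * S n + 2*Cu*(1/n))/Cd := div_nonneg hin hCd.le
      have h2 : (0:ℝ) ≤ 2*(1/(n:ℝ)) := by positivity
      positivity
    rw [pi_norm_le_iff_of_nonneg hb2nn]
    intro hw
    rw [Pi.sub_apply, Pi.smul_apply, smul_eq_mul, Pi.smul_apply, smul_eq_mul]
    rw [sum_loglikGrad_apply R v (fun t => X t ω) _ hw]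
    unfold expLoglikGrad
    have hk := hkey n hn νd νu hq1 hq2 hq3
    have hId : (1/(n:ℝ)) * (∑ i : Fin NI, if R i = hw.1 then
          ((∑ t ∈ Finset.Ioc ⌊(n:ℝ)*νd⌋₊ ⌊(n:ℝ)*νu⌋₊, ((X t ω (i, hw.2) : ℕ) : ℝ)) / v hw
            - (((Finset.Ioc ⌊(n:ℝ)*νd⌋₊ ⌊(n:ℝ)*νu⌋₊).card : ℕ) : ℝ)) else 0)
        - (νu - νd) * (∑ i : Fin NI, if R i = hw.1 then (μ0 (R0 i, hw.2) / v hw - 1) else 0)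
        = ∑ i : Fin NI, if R i = hw.1 then
            (((∑ t ∈ Finset.Ioc ⌊(n:ℝ)*νd⌋₊ ⌊(n:ℝ)*νu⌋₊, ((X t ω (i, hw.2) : ℕ) : ℝ)) / n
              - (νu - νd) * μ0 (R0 i, hw.2)) / v hw
              - ((((Finset.Ioc ⌊(n:ℝ)*νd⌋₊ ⌊(n:ℝ)*νu⌋₊).card : ℕ) : ℝ) / n - (νu - νd)))
          else 0 := by
      rw [Finset.mul_sum, Finset.mul_sum, ← Finset.sum_sub_distrib]
      refine Finset.sum_congr rfl fun i _ => ?_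
      by_cases h : R i = hw.1
      · simp only [h, if_true]
        ring
      · simp [h]
    rw [Real.norm_eq_abs, hId]
    calc |∑ i : Fin NI, if R i = hw.1 then
            (((∑ t ∈ Finset.Ioc ⌊(n:ℝ)*νd⌋₊ ⌊(n:ℝ)*νu⌋₊, ((X t ω (i, hw.2) : ℕ) : ℝ)) / n
              - (νu - νd) * μ0 (R0 i, hw.2)) / v hw
              - ((((Finset.Ioc ⌊(n:ℝ)*νd⌋₊ ⌊(n:ℝ)*νu⌋₊).card : ℕ) : ℝ) / n - (νu - νd)))
          else 0|
        ≤ ∑ i : Fin NI, |if R i = hw.1 then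
            (((∑ t ∈ Finset.Ioc ⌊(n:ℝ)*νd⌋₊ ⌊(n:ℝ)*νu⌋₊, ((X t ω (i, hw.2) : ℕ) : ℝ)) / n
              - (νu - νd) * μ0 (R0 i, hw.2)) / v hw
              - ((((Finset.Ioc ⌊(n:ℝ)*νd⌋₊ ⌊(n:ℝ)*νu⌋₊).card : ℕ) : ℝ) / n - (νu - νd)))
          else 0| := Finset.abs_sum_le_sum_abs _ _
      _ ≤ ∑ i : Fin NI, ((2 * S n + 2*Cu*(1/n))/Cd + 2*(1/n)) := by
          refine Finset.sum_le_sum fun i _ => ?_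
          by_cases h : R i = hw.1
          · simp only [h, if_true]
            have hD := hk.1 i hw.2
            have hδ := hk.2
            have hvpos : 0 < v hw := lt_of_lt_of_le hCd (hv hw).1
            calc |((∑ t ∈ Finset.Ioc ⌊(n:ℝ)*νd⌋₊ ⌊(n:ℝ)*νu⌋₊, ((X t ω (i, hw.2) : ℕ) : ℝ)) / n
                  - (νu - νd) * μ0 (R0 i, hw.2)) / v hw
                  - ((((Finset.Ioc ⌊(n:ℝ)*νd⌋₊ ⌊(n:ℝ)*νu⌋₊).card : ℕ) : ℝ) / n - (νu - νd))|
                ≤ |((∑ t ∈ Finset.Ioc ⌊(n:ℝ)*νd⌋₊ ⌊(n:ℝ)*νu⌋₊, ((X t ω (i, hw.2) : ℕ) : ℝ)) / n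
                  - (νu - νd) * μ0 (R0 i, hw.2)) / v hw|
                  + |(((Finset.Ioc ⌊(n:ℝ)*νd⌋₊ ⌊(n:ℝ)*νu⌋₊).card : ℕ) : ℝ) / n - (νu - νd)| :=
                  abs_sub _ _
              _ ≤ (2 * S n + 2*Cu*(1/n))/Cd + 2*(1/n) := by
                  have h1 : |((∑ t ∈ Finset.Ioc ⌊(n:ℝ)*νd⌋₊ ⌊(n:ℝ)*νu⌋₊,
                      ((X t ω (i, hw.2) : ℕ) : ℝ)) / n
                      - (νu - νd) * μ0 (R0 i, hw.2)) / v hw|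
                      = |(∑ t ∈ Finset.Ioc ⌊(n:ℝ)*νd⌋₊ ⌊(n:ℝ)*νu⌋₊,
                      ((X t ω (i, hw.2) : ℕ) : ℝ)) / n
                      - (νu - νd) * μ0 (R0 i, hw.2)| / v hw := by
                    rw [abs_div, abs_of_pos hvpos]
                  rw [h1]
                  have h2 := div_le_div₀ hin hD hCd (hv hw).1
                  linarith
          · simp only [h, if_false, abs_zero]
            have h1 : (0:ℝ) ≤ (2 * S n + 2*Cu*(1/n))/Cd := div_nonneg hin hCd.le
            positivity
      _ = b2 n := by
          rw [hb2def]
          simp only [Finset.sum_const, Finset.card_univ, Fintype.card_fin, nsmul_eq_mul]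
  · -- hess
    set b3 : ℕ → ℝ := fun n => (NI:ℝ) * ((2 * S n + 2*Cu*(1/n))/Cd^2) with hb3def
    have hb3tend : Tendsto b3 atTop (𝓝 0) := by
      have h := (((hStend.const_mul 2).add (hinv.const_mul (2*Cu))).div_const (Cd^2)).const_mul
        (NI:ℝ)
      simpa [hb3def] using h
    refine iSup2_tendsto_zero _ b3 hb3tend (fun n q μv => norm_nonneg _) ?_
    filter_upwards [eventually_ge_atTop 1] with n hn
    intro q μv
    obtain ⟨⟨νd, νu⟩, hq1, hq2, hq3, hq4⟩ := q
    obtain ⟨v, hv'⟩ := μv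
    have hv : ∀ p, v p ∈ Set.Icc Cd Cu := hv'
    dsimp only
    have hn0 : (0:ℝ) < n := by exact_mod_cast hn
    have hin : (0:ℝ) ≤ 2 * S n + 2*Cu*(1/n) := by
      have := hS0 n
      positivity
    have hb3nn : 0 ≤ b3 n := by
      rw [hb3def]
      dsimp only
      have h1 : (0:ℝ) ≤ (2 * S n + 2*Cu*(1/n))/Cd^2 := div_nonneg hin (by positivity)
      positivity
    rw [pi_norm_le_iff_of_nonneg hb3nn]
    intro hw
    rw [Pi.sub_apply, Pi.smul_apply, smul_eq_mul, Pi.smul_apply, smul_eq_mul]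
    rw [sum_loglikHess_apply R v (fun t => X t ω) _ hw]
    unfold expLoglikHess
    have hk := hkey n hn νd νu hq1 hq2 hq3
    have hId : (1/(n:ℝ)) * (-∑ i : Fin NI, if R i = hw.1 then
          ((∑ t ∈ Finset.Ioc ⌊(n:ℝ)*νd⌋₊ ⌊(n:ℝ)*νu⌋₊, ((X t ω (i, hw.2) : ℕ) : ℝ)) / (v hw)^2)
          else 0)
        - (νu - νd) * (-∑ i : Fin NI, if R i = hw.1 then (μ0 (R0 i, hw.2) / (v hw)^2) else 0)
        = -∑ i : Fin NI, if R i = hw.1 then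
            (((∑ t ∈ Finset.Ioc ⌊(n:ℝ)*νd⌋₊ ⌊(n:ℝ)*νu⌋₊, ((X t ω (i, hw.2) : ℕ) : ℝ)) / n
              - (νu - νd) * μ0 (R0 i, hw.2)) / (v hw)^2)
          else 0 := by
      rw [mul_neg, mul_neg, ← neg_sub', neg_inj]  -- -a - -b: fix below if needed
      rw [Finset.mul_sum, Finset.mul_sum, ← Finset.sum_sub_distrib]
      refine Finset.sum_congr rfl fun i _ => ?_
      by_cases h : R i = hw.1
      · simp only [h, if_true]
        ring
      · simp [h]
    rw [Real.norm_eq_abs, hId, abs_neg]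
    calc |∑ i : Fin NI, if R i = hw.1 then
            (((∑ t ∈ Finset.Ioc ⌊(n:ℝ)*νd⌋₊ ⌊(n:ℝ)*νu⌋₊, ((X t ω (i, hw.2) : ℕ) : ℝ)) / n
              - (νu - νd) * μ0 (R0 i, hw.2)) / (v hw)^2)
          else 0|
        ≤ ∑ i : Fin NI, |if R i = hw.1 then
            (((∑ t ∈ Finset.Ioc ⌊(n:ℝ)*νd⌋₊ ⌊(n:ℝ)*νu⌋₊, ((X t ω (i, hw.2) : ℕ) : ℝ)) / n
              - (νu - νd) * μ0 (R0 i, hw.2)) / (v hw)^2)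
          else 0| := Finset.abs_sum_le_sum_abs _ _
      _ ≤ ∑ i : Fin NI, ((2 * S n + 2*Cu*(1/n))/Cd^2) := by
          refine Finset.sum_le_sum fun i _ => ?_
          by_cases h : R i = hw.1
          · simp only [h, if_true]
            have hD := hk.1 i hw.2
            have hvpos : 0 < v hw := lt_of_lt_of_le hCd (hv hw).1
            have hsq : Cd^2 ≤ (v hw)^2 := by
              have := (hv hw).1
              nlinarith
            have h1 : |((∑ t ∈ Finset.Ioc ⌊(n:ℝ)*νd⌋₊ ⌊(n:ℝ)*νu⌋₊,
                ((X t ω (i, hw.2) : ℕ) : ℝ)) / n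
                - (νu - νd) * μ0 (R0 i, hw.2)) / (v hw)^2|
                = |(∑ t ∈ Finset.Ioc ⌊(n:ℝ)*νd⌋₊ ⌊(n:ℝ)*νu⌋₊,
                ((X t ω (i, hw.2) : ℕ) : ℝ)) / n
                - (νu - νd) * μ0 (R0 i, hw.2)| / (v hw)^2 := by
              rw [abs_div, abs_of_pos (by positivity : (0:ℝ) < (v hw)^2)]
            rw [h1]
            exact div_le_div₀ hin hD (by positivity) hsq
          · simp only [h, if_false, abs_zero]
            exact div_nonneg hin (by positivity)
      _ = b3 n := by
          rw [hb3def]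
          simp only [Finset.sum_const, Finset.card_univ, Fintype.card_fin, nsmul_eq_mul]
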